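/- Existence and uniqueness of the L-projection on a convex closed set: Let p ∈ P(X) have full support (p(x) > 0 for all x ∈ X), and let Q ⊆ P(X) be nonempty, convex, and closed, with L(Q‖p) > −∞. Then there exists exactly one q̂ ∈ Q with L(q̂‖p) = L(Q‖p); that is, the L-projection of p on Q exists and is unique. -/
import Mathlib


open scoped BigOperators Classical
open Filter Topology

noncomputable section

def pmfSet (X : Type*) [Fintype X] : Set (X → ℝ) :=
  {p | (∀ x, 0 ≤ p x) ∧ ∑ x, p x = 1}

def Rn (X : Type*) [Fintype X] (n : ℕ) : Set (X → ℝ) :=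
  {q | q ∈ pmfSet X ∧ ∀ x, ∃ k : ℕ, q x = (k : ℝ) / (n : ℝ)}

def ratPMF (X : Type*) [Fintype X] : Set (X → ℝ) :=
  {q | q ∈ pmfSet X ∧ ∀ x, ∃ r : ℚ, q x = (r : ℝ)}

def Ldiv {X : Type*} [Fintype X] (q p : X → ℝ) : EReal :=
  ∑ x, if p x = 0 then (0 : EReal)
    else if q x = 0 then (⊥ : EReal)
    else (↑(p x * Real.log (q x)) : EReal)

def LSup {X : Type*} [Fintype X] (Q : Set (X → ℝ)) (p : X → ℝ) : EReal :=
  ⨆ q ∈ Q, Ldiv q p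

def Idiv {X : Type*} [Fintype X] (p q : X → ℝ) : EReal :=
  ∑ x, if p x = 0 then (0 : EReal)
    else if q x = 0 then (⊤ : EReal)
    else (↑(p x * Real.log (p x / q x)) : EReal)

def typeProb {X : Type*} [Fintype X] (n : ℕ) (ν q : X → ℝ) : ℝ :=
  ∏ x, q x ^ ((n : ℝ) * ν x)

def post {X : Type*} [Fintype X] (n : ℕ) (ν : X → ℝ) (Q : Set (X → ℝ)) : ℝ :=
  (∑' q : ↥(Q ∩ Rn X n), typeProb n ν ↑q) / (∑' q : ↥(Rn X n), typeProb n ν ↑q)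

def postGen {X : Type*} [Fintype X] (w : (X → ℝ) → ℝ) (n : ℕ) (ν : X → ℝ)
    (Q : Set (X → ℝ)) : ℝ :=
  (∑' q : ↥(Q ∩ Rn X n), w ↑q * typeProb n ν ↑q) /
  (∑' q : ↥(Rn X n), w ↑q * typeProb n ν ↑q)

def tv {X : Type*} [Fintype X] (p q : X → ℝ) : ℝ := (1 / 2) * ∑ x, |p x - q x|

def tvBall {X : Type*} [Fintype X] (q : X → ℝ) (ε : ℝ) : Set (X → ℝ) :=
  {p | p ∈ pmfSet X ∧ tv p q ≤ ε}

def elog (x : ℝ) : EReal := if x ≤ 0 then (⊥ : EReal) else (↑(Real.log x) : EReal)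

def linFam {X : Type*} [Fintype X] {k : ℕ} (u : Fin k → X → ℝ) (a : Fin k → ℝ) :
    Set (X → ℝ) :=
  {q | q ∈ pmfSet X ∧ ∀ j, ∑ x, q x * u j x = a j}

def lambdaN {X : Type*} [Fintype X] (w : (X → ℝ) → ℝ) (n : ℕ) (ν : X → ℝ)
    (C : Set (X → ℝ)) : EReal :=
  ⨆ q ∈ C ∩ {q | q ∈ Rn X n ∧ 0 < w q},
    (Ldiv q ν + (↑((1 : ℝ) / n * Real.log (w q)) : EReal))

def priorN {X : Type*} [Fintype X] (c : ℕ → (X → ℝ) → (X → ℝ)) (pr : (X → ℝ) → ℝ)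
    (n : ℕ) (qn : X → ℝ) : ℝ :=
  ∑' q : ↥{q | q ∈ ratPMF X ∧ c n q = qn}, pr ↑q


section LprojAux

variable {X : Type*} [Fintype X]

omit [Fintype X] in
private lemma erealCoeSum (s : Finset X) (f : X → ℝ) :
    ((∑ x ∈ s, f x : ℝ) : EReal) = ∑ x ∈ s, (f x : EReal) := by
  induction s using Finset.cons_induction with
  | empty => simp
  | cons a s ha ih => rw [Finset.sum_cons, Finset.sum_cons, EReal.coe_add, ih]

private lemma isClosed_pmfSet : IsClosed (pmfSet X) := by
  have h1 : IsClosed {p : X → ℝ | ∀ x, 0 ≤ p x} := by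
    rw [Set.setOf_forall]
    exact isClosed_iInter fun x => isClosed_le continuous_const (continuous_apply x)
  have h2 : IsClosed {p : X → ℝ | ∑ x, p x = 1} :=
    isClosed_eq (continuous_finset_sum _ fun x _ => continuous_apply x) continuous_const
  exact h1.inter h2

private lemma isCompact_pmfSet : IsCompact (pmfSet X) := by
  apply IsCompact.of_isClosed_subset (isCompact_closedBall (0 : X → ℝ) 1) isClosed_pmfSet
  intro q hq
  rw [Metric.mem_closedBall, dist_zero_right, pi_norm_le_iff_of_nonneg zero_le_one]
  intro x
  rw [Real.norm_eq_abs, abs_le]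
  refine ⟨by linarith [hq.1 x], ?_⟩
  calc q x ≤ ∑ y, q y := Finset.single_le_sum (fun y _ => hq.1 y) (Finset.mem_univ x)
  _ = 1 := hq.2

private lemma Ldiv_eq_coe {p q : X → ℝ} (hp : ∀ x, p x ≠ 0) (hq : ∀ x, q x ≠ 0) :
    Ldiv q p = ((∑ x, p x * Real.log (q x) : ℝ) : EReal) := by
  rw [Ldiv, erealCoeSum]
  exact Finset.sum_congr rfl fun x _ => by rw [if_neg (hp x), if_neg (hq x)]

private lemma Ldiv_eq_bot {p q : X → ℝ} (hp : ∀ x, p x ≠ 0) {x0 : X} (hx0 : q x0 = 0) :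
    Ldiv q p = ⊥ := by
  classical
  rw [Ldiv, ← Finset.add_sum_erase _ _ (Finset.mem_univ x0), if_neg (hp x0), if_pos hx0,
    EReal.bot_add]

end LprojAux

/-- Existence and uniqueness of the L-projection on a convex closed set. -/
theorem Lprojection_exists_unique {X : Type*} [Fintype X] [Nonempty X]
    (p : X → ℝ) (hp : p ∈ pmfSet X) (hpfull : ∀ x, 0 < p x)
    (Q : Set (X → ℝ)) (hQsub : Q ⊆ pmfSet X) (hQne : Q.Nonempty)
    (hQconv : Convex ℝ Q) (hQclosed : IsClosed {r : ↥(pmfSet X) | ↑r ∈ Q})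
    (hL : ⊥ < LSup Q p) :
    ∃! qhat, qhat ∈ Q ∧ Ldiv qhat p = LSup Q p := by
  classical
  have hpne : ∀ x, p x ≠ 0 := fun x => (hpfull x).ne'
  set F : (X → ℝ) → ℝ := fun q => ∑ x, p x * Real.log (q x) with hF
  have hQle1 : ∀ q ∈ pmfSet X, ∀ x, q x ≤ 1 := by
    intro q hq x
    calc q x ≤ ∑ y, q y := Finset.single_le_sum (fun y _ => hq.1 y) (Finset.mem_univ x)
    _ = 1 := hq.2
  have hFnonpos : ∀ q ∈ pmfSet X, F q ≤ 0 := by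
    intro q hq
    apply Finset.sum_nonpos
    intro x _
    exact mul_nonpos_of_nonneg_of_nonpos (hpfull x).le (Real.log_nonpos (hq.1 x) (hQle1 q hq x))
  obtain ⟨q0, hq0Q, hq0bot⟩ : ∃ q ∈ Q, ⊥ < Ldiv q p := by
    by_contra h
    push_neg at h
    have : LSup Q p ≤ ⊥ := by
      simp only [LSup]
      exact iSup₂_le fun q hq => h q hq
    exact absurd hL (not_lt.2 this)
  have hq0pos : ∀ x, 0 < q0 x := by
    intro x
    rcases ((hQsub hq0Q).1 x).lt_or_eq with h | h
    · exact h
    · exact absurd hq0bot (by rw [Ldiv_eq_bot hpne h.symm]; exact lt_irrefl _)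
  set L0 := F q0 with hL0
  have hLd0 : Ldiv q0 p = (L0 : EReal) := Ldiv_eq_coe hpne fun x => (hq0pos x).ne'
  set δ : X → ℝ := fun x => min (q0 x) (Real.exp (L0 / p x)) with hδ
  have hδpos : ∀ x, 0 < δ x := fun x => lt_min (hq0pos x) (Real.exp_pos _)
  set K := Q ∩ {q : X → ℝ | ∀ x, δ x ≤ q x} with hKdef
  have hQclosed' : IsClosed Q := by
    have h1 : IsClosed (Subtype.val '' {r : ↥(pmfSet X) | ↑r ∈ Q}) :=
      (isClosed_pmfSet.isClosedEmbedding_subtypeVal).isClosedMap _ hQclosed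
    have h2 : Subtype.val '' {r : ↥(pmfSet X) | ↑r ∈ Q} = Q := by
      ext q
      constructor
      · rintro ⟨r, hr, rfl⟩; exact hr
      · intro hq; exact ⟨⟨q, hQsub hq⟩, hq, rfl⟩
    rwa [h2] at h1
  have hKclosed : IsClosed K := by
    apply hQclosed'.inter
    rw [Set.setOf_forall]
    exact isClosed_iInter fun x => isClosed_le continuous_const (continuous_apply x)
  have hKsub : K ⊆ pmfSet X := fun q hq => hQsub hq.1
  have hKcomp : IsCompact K := isCompact_pmfSet.of_isClosed_subset hKclosed hKsub
  have hq0K : q0 ∈ K := ⟨hq0Q, fun x => min_le_left _ _⟩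
  have hFcont : ContinuousOn F K := by
    intro q hq
    apply ContinuousAt.continuousWithinAt
    apply tendsto_finset_sum
    intro x _
    have hx : q x ≠ 0 := (lt_of_lt_of_le (hδpos x) (hq.2 x)).ne'
    have hax : ContinuousAt (fun q' : X → ℝ => q' x) q := (continuous_apply x).continuousAt
    exact (hax.log hx).const_mul (p x)
  obtain ⟨qhat, hqhatK, hqhatmax⟩ := hKcomp.exists_isMaxOn ⟨q0, hq0K⟩ hFcont
  have hqhatpos : ∀ x, 0 < qhat x := fun x => lt_of_lt_of_le (hδpos x) (hqhatK.2 x)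
  have hLdhat : Ldiv qhat p = (F qhat : EReal) := Ldiv_eq_coe hpne fun x => (hqhatpos x).ne'
  have hL0hat : L0 ≤ F qhat := hqhatmax hq0K
  have hsmall : ∀ q ∈ pmfSet X, (∀ x, 0 < q x) →
      ∀ x0, q x0 < Real.exp (L0 / p x0) → F q < L0 := by
    intro q hq hqpos x0 hx0
    have h1 : Real.log (q x0) < L0 / p x0 := by
      have := Real.log_lt_log (hqpos x0) hx0
      rwa [Real.log_exp] at this
    have h2 : p x0 * Real.log (q x0) < L0 := by
      have h3 : p x0 * Real.log (q x0) < p x0 * (L0 / p x0) :=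
        mul_lt_mul_of_pos_left h1 (hpfull x0)
      have h4 : p x0 * (L0 / p x0) = L0 := by rw [mul_comm, div_mul_cancel₀ _ (hpne x0)]
      linarith
    have h5 : ∑ x ∈ Finset.univ.erase x0, p x * Real.log (q x) ≤ 0 := by
      apply Finset.sum_nonpos
      intro x _
      exact mul_nonpos_of_nonneg_of_nonpos (hpfull x).le
        (Real.log_nonpos (hqpos x).le (hQle1 q hq x))
    calc F q = p x0 * Real.log (q x0) + ∑ x ∈ Finset.univ.erase x0, p x * Real.log (q x) :=
        (Finset.add_sum_erase _ _ (Finset.mem_univ x0)).symm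
    _ < L0 := by linarith
  have hbound : ∀ q ∈ Q, Ldiv q p ≤ (F qhat : EReal) := by
    intro q hqQ
    by_cases hz : ∀ x, 0 < q x
    · rw [Ldiv_eq_coe hpne fun x => (hz x).ne', EReal.coe_le_coe_iff]
      by_cases hmem : ∀ x, δ x ≤ q x
      · exact hqhatmax ⟨hqQ, hmem⟩
      · push_neg at hmem
        obtain ⟨x0, hx0⟩ := hmem
        have hlt : q x0 < Real.exp (L0 / p x0) := lt_of_lt_of_le hx0 (min_le_right _ _)
        exact (lt_of_lt_of_le (hsmall q (hQsub hqQ) hz x0 hlt) hL0hat).le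
    · push_neg at hz
      obtain ⟨x0, hx0⟩ := hz
      rw [Ldiv_eq_bot hpne (le_antisymm hx0 ((hQsub hqQ).1 x0))]
      exact bot_le
  have hLSup : LSup Q p = (F qhat : EReal) := by
    apply le_antisymm
    · simp only [LSup]
      exact iSup₂_le hbound
    · rw [← hLdhat]
      simp only [LSup]
      exact le_iSup₂_of_le qhat hqhatK.1 le_rfl
  refine ⟨qhat, ⟨hqhatK.1, by rw [hLdhat, hLSup]⟩, ?_⟩
  rintro q' ⟨hq'Q, hq'L⟩
  by_contra hne
  have hq'pos : ∀ x, 0 < q' x := by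
    intro x
    rcases ((hQsub hq'Q).1 x).lt_or_eq with h | h
    · exact h
    · exfalso
      rw [Ldiv_eq_bot hpne h.symm, hLSup] at hq'L
      exact (EReal.coe_ne_bot _) hq'L.symm
  have hFq' : F q' = F qhat := by
    have h := hq'L
    rw [Ldiv_eq_coe hpne (fun x => (hq'pos x).ne'), hLSup, EReal.coe_eq_coe_iff] at h
    exact h
  obtain ⟨x0, hx0ne⟩ : ∃ x, q' x ≠ qhat x := by
    by_contra h
    push_neg at h
    exact hne (funext h)
  set m : X → ℝ := (1/2 : ℝ) • q' + (1/2 : ℝ) • qhat with hm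
  have hmQ : m ∈ Q := hQconv hq'Q hqhatK.1 (by norm_num) (by norm_num) (by norm_num)
  have hmx : ∀ x, m x = (1/2 : ℝ) * q' x + (1/2 : ℝ) * qhat x := by
    intro x
    simp [hm, Pi.add_apply, Pi.smul_apply, smul_eq_mul]
  have hmpos : ∀ x, 0 < m x := by
    intro x
    have h1 := hq'pos x
    have h2 := hqhatpos x
    rw [hmx x]
    linarith
  have hterm : ∀ x, (1/2 : ℝ) * (p x * Real.log (q' x)) + (1/2 : ℝ) * (p x * Real.log (qhat x))
      ≤ p x * Real.log (m x) := by
    intro x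
    have hcc := strictConcaveOn_log_Ioi.concaveOn.2 (Set.mem_Ioi.2 (hq'pos x))
      (Set.mem_Ioi.2 (hqhatpos x)) (by norm_num : (0:ℝ) ≤ 1/2) (by norm_num : (0:ℝ) ≤ 1/2)
      (by norm_num : (1/2 : ℝ) + 1/2 = 1)
    rw [smul_eq_mul, smul_eq_mul, smul_eq_mul, smul_eq_mul] at hcc
    have h2 := mul_le_mul_of_nonneg_left hcc (hpfull x).le
    rw [hmx x]
    calc (1/2 : ℝ) * (p x * Real.log (q' x)) + (1/2 : ℝ) * (p x * Real.log (qhat x))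
        = p x * ((1/2 : ℝ) * Real.log (q' x) + (1/2 : ℝ) * Real.log (qhat x)) := by ring
    _ ≤ p x * Real.log ((1/2 : ℝ) * q' x + (1/2 : ℝ) * qhat x) := h2
  have htermstrict : (1/2 : ℝ) * (p x0 * Real.log (q' x0))
      + (1/2 : ℝ) * (p x0 * Real.log (qhat x0)) < p x0 * Real.log (m x0) := by
    have hcc := strictConcaveOn_log_Ioi.2 (Set.mem_Ioi.2 (hq'pos x0))
      (Set.mem_Ioi.2 (hqhatpos x0)) hx0ne (by norm_num : (0:ℝ) < 1/2)
      (by norm_num : (0:ℝ) < 1/2) (by norm_num : (1/2 : ℝ) + 1/2 = 1)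
    rw [smul_eq_mul, smul_eq_mul, smul_eq_mul, smul_eq_mul] at hcc
    have h2 := mul_lt_mul_of_pos_left hcc (hpfull x0)
    rw [hmx x0]
    calc (1/2 : ℝ) * (p x0 * Real.log (q' x0)) + (1/2 : ℝ) * (p x0 * Real.log (qhat x0))
        = p x0 * ((1/2 : ℝ) * Real.log (q' x0) + (1/2 : ℝ) * Real.log (qhat x0)) := by ring
    _ < p x0 * Real.log ((1/2 : ℝ) * q' x0 + (1/2 : ℝ) * qhat x0) := h2
  have hFm : F qhat < F m := by
    have hsum : ∑ x, ((1/2 : ℝ) * (p x * Real.log (q' x))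
        + (1/2 : ℝ) * (p x * Real.log (qhat x))) < ∑ x, p x * Real.log (m x) :=
      Finset.sum_lt_sum (fun x _ => hterm x) ⟨x0, Finset.mem_univ x0, htermstrict⟩
    have heq : ∑ x, ((1/2 : ℝ) * (p x * Real.log (q' x))
        + (1/2 : ℝ) * (p x * Real.log (qhat x))) = (1/2 : ℝ) * F q' + (1/2 : ℝ) * F qhat := by
      rw [hF, Finset.sum_add_distrib, ← Finset.mul_sum, ← Finset.mul_sum]
    rw [heq, hFq'] at hsum
    have : F m = ∑ x, p x * Real.log (m x) := rfl
    linarith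
  have h1 : Ldiv m p ≤ (F qhat : EReal) := hbound m hmQ
  rw [Ldiv_eq_coe hpne (fun x => (hmpos x).ne'), EReal.coe_le_coe_iff] at h1
  have : F m = ∑ x, p x * Real.log (m x) := rfl
  linarith
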